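/- Let p,t∈ℂ* with |p|<1, let r≥1, n≥1, μ∈Z_{r,n}, let a=(a_1,…,a_r)∈(ℂ*)^r be generic (all denominators in the definition of E_μ nonzero, both for a and for the p-shifted parameters), and let w=(w_1,…,w_{r-1})∈(ℂ*)^{r-1}. Define F_μ(a;w;p)=∏_{k=1}^r ∏_{l=1}^{r-1} e(a_k, w_l; p)_{μ_k} and f_μ(z;w;p)=E_μ(a_1,…,a_r; z; p)·F_μ(a;w;p). Then for every k∈{1,…,r} and every z∈(ℂ*)^n, replacing a_k by p·a_k leaves f_μ(z;w;p) unchanged: f_μ evaluated with parameters (a_1,…,p·a_k,…,a_r) equals f_μ evaluated with parameters (a_1,…,a_r). -/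

import Mathlib

open scoped BigOperators Topology
open Finset MeasureTheory

noncomputable section

/-- `(u;p)_∞ = ∏_{i≥0} (1 - p^i u)`. -/
def poch (u p : ℂ) : ℂ := ∏' i : ℕ, (1 - p ^ i * u)

/-- `(u;p,q)_∞ = ∏_{i,j≥0} (1 - p^i q^j u)`. -/
def poch2 (u p q : ℂ) : ℂ := ∏' ij : ℕ × ℕ, (1 - p ^ ij.1 * q ^ ij.2 * u)

/-- The multiplicative theta function `θ(u;p)`. -/
def theta (u p : ℂ) : ℂ := poch u p * poch (p / u) p

/-- The elliptic gamma function `Γ(u;p,q)`. -/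
def ellGamma (u p q : ℂ) : ℂ := poch2 (p * q / u) p q / poch2 u p q

/-- `e(u,v;p) = u⁻¹ θ(uv;p) θ(u/v;p)`. -/
def efun (p t u v : ℂ) : ℂ := u⁻¹ * theta (u * v) p * theta (u / v) p

/-- `θ(u;p)_{t,k}`. -/
def thetaFac (p t u : ℂ) (k : ℕ) : ℂ := ∏ j ∈ Finset.range k, theta (t ^ j * u) p

/-- `e(u,v;p)_{t,k}`. -/
def efunFac (p t u v : ℂ) (k : ℕ) : ℂ := ∏ j ∈ Finset.range k, efun p t (t ^ j * u) v

/-- The number of indices `j < i` with `k j = l`. -/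
def cnt {n s : ℕ} (k : Fin n → Fin s) (i : ℕ) (l : Fin s) : ℕ :=
  (Finset.univ.filter (fun j : Fin n => (j : ℕ) < i ∧ k j = l)).card

/-- The elliptic interpolation function `E_μ(c;z;p)` of type `BC_n`. -/
def interpE (p t : ℂ) {s n : ℕ} (c : Fin s → ℂ) (z : Fin n → ℂ) (μ : Fin s → ℕ) : ℂ :=
  ∑ k : Fin n → Fin s,
    if ∀ l, cnt k n l = μ l then
      ∏ i : Fin n, ∏ l ∈ Finset.univ.filter (fun l => l ≠ k i),
        efun p t (z i) (t ^ cnt k ((i : ℕ) + 1) l * c l) /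
          efun p t (t ^ cnt k (i : ℕ) (k i) * c (k i)) (t ^ cnt k (i : ℕ) l * c l)
    else 0

/-- `Z_{s,n}`, the multi-indices `μ ∈ ℕ^s` with `|μ| = n`. -/
abbrev Zidx (s n : ℕ) := {μ : Fin s → ℕ // ∑ i, μ i = n}

instance (s n : ℕ) : Fintype (Zidx s n) :=
  Fintype.subtype (Finset.Nat.antidiagonalTuple s n)
    (fun μ => Finset.Nat.mem_antidiagonalTuple)

/-- The `BC_n` elliptic hypergeometric kernel `Φ(z;a;p,q)`. -/
def PhiBC (p q t : ℂ) {n m : ℕ} (a : Fin m → ℂ) (z : Fin n → ℂ) : ℂ :=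
  (∏ i, (∏ k, ellGamma (a k * z i) p q * ellGamma (a k * (z i)⁻¹) p q) /
      (ellGamma (z i ^ 2) p q * ellGamma ((z i)⁻¹ ^ 2) p q)) *
  ∏ i, ∏ j ∈ Finset.univ.filter (fun j => i < j),
    (ellGamma (t * (z i * z j)) p q * ellGamma (t * (z i / z j)) p q *
        ellGamma (t * (z j / z i)) p q * ellGamma (t / (z i * z j)) p q) /
      (ellGamma (z i * z j) p q * ellGamma (z i / z j) p q *
        ellGamma (z j / z i) p q * ellGamma ((z i * z j)⁻¹) p q)

/-- `∫_{T^n} f(z) ω_n(z)` where `ω_n(z) = dz/((2πi)^n z₁⋯z_n)`. -/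
def torusInt (n : ℕ) (f : (Fin n → ℂ) → ℂ) : ℂ :=
  (1 / (2 * (Real.pi : ℂ))) ^ n *
    ∫ θ : Fin n → ℝ in Set.univ.pi fun _ : Fin n => Set.Icc (0 : ℝ) (2 * Real.pi),
      f fun i => Complex.exp (Complex.I * (θ i : ℂ))


lemma hasProd_zero_of_exists {f : ℕ → ℂ} (h : ∃ i, f i = 0) : HasProd f 0 := by
  obtain ⟨i, hi⟩ := h
  have : ∀ᶠ s : Finset ℕ in Filter.atTop, ∏ j ∈ s, f j = 0 := by
    refine Filter.eventually_atTop.mpr ⟨{i}, fun s hs => Finset.prod_eq_zero (hs (Finset.mem_singleton_self i)) hi⟩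
  exact Filter.Tendsto.congr' (this.mono fun s hs => hs.symm) tendsto_const_nhds

lemma multipliable_poch (p : ℂ) (hp : ‖p‖ < 1) (u : ℂ) :
    Multipliable (fun i : ℕ => 1 - p ^ i * u) := by
  by_cases h : ∃ i, (1 : ℂ) - p ^ i * u = 0
  · exact ⟨0, hasProd_zero_of_exists h⟩
  · push_neg at h
    refine Complex.multipliable_of_summable_log ?_
    have hplt : ‖p‖ < 1 := by simpa using hp
    have h0 : Filter.Tendsto (fun n : ℕ => ‖p‖ ^ n * ‖u‖) Filter.atTop (nhds 0) := by
      simpa using (tendsto_pow_atTop_nhds_zero_of_norm_lt_one (by simpa using hplt)).mul_const ‖u‖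
    have hev : ∀ᶠ n : ℕ in Filter.atTop, ‖Complex.log (1 - p ^ n * u)‖ ≤ (3/2) * (‖p‖ ^ n * ‖u‖) := by
      filter_upwards [h0.eventually_le_const (by norm_num : (0:ℝ) < 1/2)] with n hn
      have hnorm : ‖-(p ^ n * u)‖ = ‖p‖ ^ n * ‖u‖ := by
        simp [norm_mul, norm_pow]
      have := Complex.norm_log_one_add_half_le_self (z := -(p ^ n * u)) (by rw [hnorm]; exact hn)
      simpa [hnorm, sub_eq_add_neg] using this
    have hsum : Summable (fun n : ℕ => (3/2 : ℝ) * (‖p‖ ^ n * ‖u‖)) :=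
      (((summable_geometric_of_lt_one (norm_nonneg p) hplt).mul_right ‖u‖)).mul_left _
    exact Summable.of_norm_bounded_eventually_nat hsum hev

lemma poch_split (p : ℂ) (hp : ‖p‖ < 1) (u : ℂ) :
    poch u p = (1 - u) * poch (p * u) p := by
  have hm : Multipliable (fun n : ℕ => 1 - p ^ (n + 1) * u) :=
    (multipliable_poch p hp (p * u)).congr fun n => by ring_nf
  have h := tprod_eq_zero_mul' (f := fun n : ℕ => 1 - p ^ n * u) hm
  simp only [pow_zero, one_mul] at h
  rw [poch, h, poch]
  congr 1
  exact tprod_congr fun i => by ring_nf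

lemma theta_pshift (p u : ℂ) (hp0 : p ≠ 0) (hp : ‖p‖ < 1) (hu : u ≠ 0) :
    theta (p * u) p = -u⁻¹ * theta u p := by
  unfold theta
  have h1 : p / (p * u) = u⁻¹ := by field_simp
  rw [h1, poch_split p hp u, poch_split p hp u⁻¹,
    show p * u⁻¹ = p / u from (div_eq_mul_inv p u).symm]
  field_simp
  ring

lemma theta_pshift_inv (p x : ℂ) (hp0 : p ≠ 0) (hp : ‖p‖ < 1) (hx : x ≠ 0) :
    theta (x / p) p = -(x / p) * theta x p := by
  have h := theta_pshift p (x / p) hp0 hp (div_ne_zero hx hp0)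
  rw [mul_div_cancel₀ x hp0] at h
  rw [h]
  have hxp : x / p ≠ 0 := div_ne_zero hx hp0
  field_simp

lemma efun_pshift_left (p t u v : ℂ) (hp0 : p ≠ 0) (hp : ‖p‖ < 1)
    (hu : u ≠ 0) (hv : v ≠ 0) :
    efun p t (p * u) v = (p * u ^ 2)⁻¹ * efun p t u v := by
  unfold efun
  rw [show p * u * v = p * (u * v) by ring, show p * u / v = p * (u / v) by ring,
    theta_pshift p (u * v) hp0 hp (mul_ne_zero hu hv),
    theta_pshift p (u / v) hp0 hp (div_ne_zero hu hv)]
  field_simp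

lemma efun_pshift_right (p t u v : ℂ) (hp0 : p ≠ 0) (hp : ‖p‖ < 1)
    (hu : u ≠ 0) (hv : v ≠ 0) :
    efun p t u (p * v) = (p * v ^ 2)⁻¹ * efun p t u v := by
  unfold efun
  rw [show u * (p * v) = p * (u * v) by ring, show u / (p * v) = (u / v) / p by ring,
    theta_pshift p (u * v) hp0 hp (mul_ne_zero hu hv),
    theta_pshift_inv p (u / v) hp0 hp (div_ne_zero hu hv)]
  field_simp

lemma cnt_succ {n s : ℕ} (κ : Fin n → Fin s) (i : Fin n) (l : Fin s) :
    cnt κ ((i : ℕ) + 1) l = cnt κ (i : ℕ) l + if κ i = l then 1 else 0 := by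
  unfold cnt
  rw [Finset.card_filter, Finset.card_filter]
  have h1 : ∀ j : Fin n, (if ((j : ℕ) < (i : ℕ) + 1 ∧ κ j = l) then (1 : ℕ) else 0)
      = (if ((j : ℕ) < (i : ℕ) ∧ κ j = l) then 1 else 0)
        + (if j = i then (if κ j = l then 1 else 0) else 0) := by
    intro j
    by_cases hji : j = i
    · subst hji; simp
    · have hne : (j : ℕ) ≠ (i : ℕ) := fun h => hji (Fin.ext h)
      by_cases hl : κ j = l <;> simp [hji, hl] <;> split_ifs <;> omega
  rw [Finset.sum_congr rfl (fun j _ => h1 j), Finset.sum_add_distrib,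
    Finset.sum_ite_eq' Finset.univ i, if_pos (Finset.mem_univ i)]

lemma cnt_mono {n s : ℕ} (κ : Fin n → Fin s) {i i' : ℕ} (h : i ≤ i') (l : Fin s) :
    cnt κ i l ≤ cnt κ i' l := by
  apply Finset.card_le_card
  intro j hj
  simp only [Finset.mem_filter] at hj ⊢
  exact ⟨hj.1, lt_of_lt_of_le hj.2.1 h, hj.2.2⟩

lemma cnt_total {n s : ℕ} (κ : Fin n → Fin s) (l : Fin s) :
    cnt κ n l = (Finset.univ.filter (fun j : Fin n => κ j = l)).card := by
  unfold cnt
  congr 1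
  ext j
  simp [j.isLt]

lemma cnt_strict {n s : ℕ} (κ : Fin n → Fin s) {i i' : Fin n}
    (h : (i : ℕ) < (i' : ℕ)) (k : Fin s) (hk : κ i = k) :
    cnt κ (i : ℕ) k < cnt κ (i' : ℕ) k := by
  have h1 : cnt κ ((i : ℕ) + 1) k = cnt κ (i : ℕ) k + 1 := by
    rw [cnt_succ, if_pos hk]
  calc cnt κ (i : ℕ) k < cnt κ ((i : ℕ) + 1) k := by omega
    _ ≤ cnt κ (i' : ℕ) k := cnt_mono κ h k

lemma cnt_lt_total {n s : ℕ} (κ : Fin n → Fin s) {i : Fin n} (k : Fin s) (hk : κ i = k) :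
    cnt κ (i : ℕ) k < cnt κ n k := by
  have h1 : cnt κ ((i : ℕ) + 1) k = cnt κ (i : ℕ) k + 1 := by
    rw [cnt_succ, if_pos hk]
  have h2 : cnt κ ((i : ℕ) + 1) k ≤ cnt κ n k := cnt_mono κ i.isLt k
  omega

lemma cnt_injOn {n s : ℕ} (κ : Fin n → Fin s) (k : Fin s) :
    Set.InjOn (fun i : Fin n => cnt κ (i : ℕ) k)
      (Finset.univ.filter (fun i : Fin n => κ i = k)) := by
  intro i hi i' hi' hii
  simp only [Finset.coe_filter, Set.mem_setOf_eq] at hi hi'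
  by_contra hne
  rcases lt_or_gt_of_ne (fun h : (i : ℕ) = (i' : ℕ) => hne (Fin.ext h)) with h | h
  · exact absurd hii (Nat.ne_of_lt (cnt_strict κ h k hi.2))
  · exact absurd hii.symm (Nat.ne_of_lt (cnt_strict κ h k hi'.2))

lemma cnt_image {n s : ℕ} (κ : Fin n → Fin s) (k : Fin s) :
    (Finset.univ.filter (fun i : Fin n => κ i = k)).image (fun i : Fin n => cnt κ (i : ℕ) k)
      = Finset.range (cnt κ n k) := by
  apply Finset.eq_of_subset_of_card_le
  · intro x hx
    simp only [Finset.mem_image, Finset.mem_filter] at hx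
    obtain ⟨i, ⟨-, hik⟩, rfl⟩ := hx
    exact Finset.mem_range.mpr (cnt_lt_total κ k hik)
  · rw [Finset.card_range, Finset.card_image_of_injOn (cnt_injOn κ k), ← cnt_total]

lemma prod_cnt {n s : ℕ} (κ : Fin n → Fin s) (k : Fin s) (f : ℕ → ℂ) :
    ∏ i ∈ Finset.univ.filter (fun i : Fin n => κ i = k), f (cnt κ (i : ℕ) k)
      = ∏ j ∈ Finset.range (cnt κ n k), f j := by
  rw [← cnt_image κ k, Finset.prod_image (fun i hi i' hi' h =>
    cnt_injOn κ k (by simpa using hi) (by simpa using hi') h)]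

lemma efunFac_pshift (p t c v : ℂ) (hp0 : p ≠ 0) (hp : ‖p‖ < 1)
    (ht0 : t ≠ 0) (hc : c ≠ 0) (hv : v ≠ 0) (m : ℕ) :
    efunFac p t (p * c) v m
      = (∏ j ∈ Finset.range m, (p * (t ^ j * c) ^ 2))⁻¹ * efunFac p t c v m := by
  unfold efunFac
  rw [← Finset.prod_inv_distrib, ← Finset.prod_mul_distrib]
  refine Finset.prod_congr rfl fun j _ => ?_
  rw [show t ^ j * (p * c) = p * (t ^ j * c) by ring,
    efun_pshift_left p t (t ^ j * c) v hp0 hp (mul_ne_zero (pow_ne_zero _ ht0) hc) hv]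

lemma interpE_pshift (p t : ℂ) (hp0 : p ≠ 0) (hp : ‖p‖ < 1) (ht0 : t ≠ 0)
    (r' n : ℕ) (μ : Fin (r' + 1) → ℕ)
    (a : Fin (r' + 1) → ℂ) (ha : ∀ k, a k ≠ 0) (k : Fin (r' + 1))
    (z : Fin n → ℂ) (hz : ∀ i, z i ≠ 0) :
    interpE p t (Function.update a k (p * a k)) z μ
      = (∏ j ∈ Finset.range (μ k), (p * (t ^ j * a k) ^ 2)) ^ r' * interpE p t a z μ := by
  set A := Function.update a k (p * a k) with hA
  unfold interpE
  rw [Finset.mul_sum]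
  refine Finset.sum_congr rfl fun κ _ => ?_
  by_cases hcond : ∀ l, cnt κ n l = μ l
  · rw [if_pos hcond, if_pos hcond]
    have hcard : ∀ i : Fin n,
        (Finset.univ.filter fun l : Fin (r' + 1) => l ≠ κ i).card = r' := by
      intro i
      rw [Finset.filter_ne', Finset.card_erase_of_mem (Finset.mem_univ _),
        Finset.card_univ, Fintype.card_fin]
      omega
    have hfac : ∀ i : Fin n, ∀ l ∈ Finset.univ.filter (fun l => l ≠ κ i),
        efun p t (z i) (t ^ cnt κ ((i : ℕ) + 1) l * A l) /
            efun p t (t ^ cnt κ (i : ℕ) (κ i) * A (κ i)) (t ^ cnt κ (i : ℕ) l * A l)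
        = (if κ i = k then p * (t ^ cnt κ (i : ℕ) k * a k) ^ 2 else 1) *
          (efun p t (z i) (t ^ cnt κ ((i : ℕ) + 1) l * a l) /
            efun p t (t ^ cnt κ (i : ℕ) (κ i) * a (κ i)) (t ^ cnt κ (i : ℕ) l * a l)) := by
      intro i l hl
      have hlκ : l ≠ κ i := (Finset.mem_filter.mp hl).2
      by_cases hik : κ i = k
      · rw [if_pos hik]
        have hlk : l ≠ k := fun h => hlκ (h.trans hik.symm)
        rw [hA, Function.update_of_ne hlk, hik, Function.update_self]
        rw [show t ^ cnt κ (i : ℕ) k * (p * a k) = p * (t ^ cnt κ (i : ℕ) k * a k) by ring,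
          efun_pshift_left p t _ _ hp0 hp
            (mul_ne_zero (pow_ne_zero _ ht0) (ha k))
            (mul_ne_zero (pow_ne_zero _ ht0) (ha l))]
        rw [div_eq_mul_inv, mul_inv, inv_inv, div_eq_mul_inv]
        ring
      · rw [if_neg hik, one_mul, hA, Function.update_of_ne hik]
        by_cases hlk : l = k
        · subst hlk
          rw [Function.update_self]
          rw [cnt_succ κ i l, if_neg hik, add_zero]
          rw [show t ^ cnt κ (i : ℕ) l * (p * a l) = p * (t ^ cnt κ (i : ℕ) l * a l) by ring,
            efun_pshift_right p t _ _ hp0 hp (hz i)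
              (mul_ne_zero (pow_ne_zero _ ht0) (ha l)),
            efun_pshift_right p t _ _ hp0 hp
              (mul_ne_zero (pow_ne_zero _ ht0) (ha (κ i)))
              (mul_ne_zero (pow_ne_zero _ ht0) (ha l))]
          exact mul_div_mul_left _ _ (inv_ne_zero (mul_ne_zero hp0 (pow_ne_zero _
            (mul_ne_zero (pow_ne_zero _ ht0) (ha l)))))
        · rw [Function.update_of_ne hlk]
    calc (∏ i : Fin n, ∏ l ∈ Finset.univ.filter (fun l => l ≠ κ i),
          efun p t (z i) (t ^ cnt κ ((i : ℕ) + 1) l * A l) /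
            efun p t (t ^ cnt κ (i : ℕ) (κ i) * A (κ i)) (t ^ cnt κ (i : ℕ) l * A l))
        = ∏ i : Fin n, ∏ l ∈ Finset.univ.filter (fun l => l ≠ κ i),
            (if κ i = k then p * (t ^ cnt κ (i : ℕ) k * a k) ^ 2 else 1) *
            (efun p t (z i) (t ^ cnt κ ((i : ℕ) + 1) l * a l) /
              efun p t (t ^ cnt κ (i : ℕ) (κ i) * a (κ i)) (t ^ cnt κ (i : ℕ) l * a l)) :=
          Finset.prod_congr rfl fun i _ => Finset.prod_congr rfl (hfac i)
      _ = ∏ i : Fin n,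
            ((if κ i = k then p * (t ^ cnt κ (i : ℕ) k * a k) ^ 2 else 1) ^ r' *
            ∏ l ∈ Finset.univ.filter (fun l => l ≠ κ i),
              (efun p t (z i) (t ^ cnt κ ((i : ℕ) + 1) l * a l) /
                efun p t (t ^ cnt κ (i : ℕ) (κ i) * a (κ i)) (t ^ cnt κ (i : ℕ) l * a l))) := by
          refine Finset.prod_congr rfl fun i _ => ?_
          rw [Finset.prod_mul_distrib, Finset.prod_const, hcard i]
      _ = (∏ i : Fin n, (if κ i = k then p * (t ^ cnt κ (i : ℕ) k * a k) ^ 2 else 1)) ^ r' *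
            ∏ i : Fin n, ∏ l ∈ Finset.univ.filter (fun l => l ≠ κ i),
              (efun p t (z i) (t ^ cnt κ ((i : ℕ) + 1) l * a l) /
                efun p t (t ^ cnt κ (i : ℕ) (κ i) * a (κ i)) (t ^ cnt κ (i : ℕ) l * a l)) := by
          rw [Finset.prod_mul_distrib, Finset.prod_pow]
      _ = _ := by
          congr 1
          rw [← Finset.prod_filter, prod_cnt κ k (fun j => p * (t ^ j * a k) ^ 2), hcond k]
  · rw [if_neg hcond, if_neg hcond, mul_zero]

/-- Lemma 4.2: the functions
`f_μ(z;w;p) = E_μ(a;z;p) F_μ(a;w;p)` are invariant under `p`-shifts of the parameters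
`a_k` (here `r = r'+1`). -/
theorem fmu_param_pshift_invariant (p t : ℂ) (hp0 : p ≠ 0) (hp : ‖p‖ < 1)
    (ht0 : t ≠ 0) (r' n : ℕ) (hn : 1 ≤ n) (μ : Zidx (r' + 1) n)
    (a : Fin (r' + 1) → ℂ) (ha : ∀ k, a k ≠ 0)
    (w : Fin r' → ℂ) (hw : ∀ l, w l ≠ 0)
    (hgen : ∀ α β : ℕ, α ≤ n → β ≤ n → ∀ i j : Fin (r' + 1), i ≠ j →
      efun p t (t ^ α * a i) (t ^ β * a j) ≠ 0)
    (k : Fin (r' + 1))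
    (hgen' : ∀ α β : ℕ, α ≤ n → β ≤ n → ∀ i j : Fin (r' + 1), i ≠ j →
      efun p t (t ^ α * Function.update a k (p * a k) i)
        (t ^ β * Function.update a k (p * a k) j) ≠ 0)
    (z : Fin n → ℂ) (hz : ∀ i, z i ≠ 0) :
    interpE p t (Function.update a k (p * a k)) z μ.1
      * ∏ k' : Fin (r' + 1), ∏ l : Fin r',
          efunFac p t (Function.update a k (p * a k) k') (w l) (μ.1 k')
    = interpE p t a z μ.1
      * ∏ k' : Fin (r' + 1), ∏ l : Fin r', efunFac p t (a k') (w l) (μ.1 k') := by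
  set A := Function.update a k (p * a k) with hA
  set c0 := ∏ j ∈ Finset.range (μ.1 k), (p * (t ^ j * a k) ^ 2) with hc0def
  have hc0 : c0 ≠ 0 :=
    Finset.prod_ne_zero_iff.mpr fun j _ =>
      mul_ne_zero hp0 (pow_ne_zero _ (mul_ne_zero (pow_ne_zero _ ht0) (ha k)))
  have hE := interpE_pshift p t hp0 hp ht0 r' n μ.1 a ha k z hz
  have hF : (∏ k' : Fin (r' + 1), ∏ l : Fin r', efunFac p t (A k') (w l) (μ.1 k'))
      = (c0⁻¹) ^ r' *
        ∏ k' : Fin (r' + 1), ∏ l : Fin r', efunFac p t (a k') (w l) (μ.1 k') := by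
    calc (∏ k' : Fin (r' + 1), ∏ l : Fin r', efunFac p t (A k') (w l) (μ.1 k'))
        = ∏ k' : Fin (r' + 1), ((if k' = k then c0⁻¹ else 1) ^ r' *
            ∏ l : Fin r', efunFac p t (a k') (w l) (μ.1 k')) := by
          refine Finset.prod_congr rfl fun k' _ => ?_
          by_cases hk' : k' = k
          · subst hk'
            rw [if_pos rfl,
              show (c0⁻¹ : ℂ) ^ r' = ∏ _l : Fin r', c0⁻¹ by
                rw [Finset.prod_const, Finset.card_univ, Fintype.card_fin],
              ← Finset.prod_mul_distrib]
            refine Finset.prod_congr rfl fun l _ => ?_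
            rw [hA, Function.update_self, efunFac_pshift p t (a k') (w l) hp0 hp ht0
              (ha k') (hw l), hc0def]
          · rw [if_neg hk', one_pow, one_mul, hA, Function.update_of_ne hk']
      _ = (∏ k' : Fin (r' + 1), (if k' = k then c0⁻¹ else 1)) ^ r' *
            ∏ k' : Fin (r' + 1), ∏ l : Fin r', efunFac p t (a k') (w l) (μ.1 k') := by
          rw [Finset.prod_mul_distrib, Finset.prod_pow]
      _ = (c0⁻¹) ^ r' *
            ∏ k' : Fin (r' + 1), ∏ l : Fin r', efunFac p t (a k') (w l) (μ.1 k') := by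
          rw [Finset.prod_ite_eq' Finset.univ k (fun _ => (c0⁻¹ : ℂ)),
            if_pos (Finset.mem_univ k)]
  rw [hE, hF, mul_mul_mul_comm, ← mul_pow, mul_inv_cancel₀ hc0, one_pow, one_mul]

end
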